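/- Let G be a finite group and M a central subgroup of G with M contained in the kernel of every homomorphism G → M. Then the group Aut^M_{Z(G)}(G) of automorphisms of G that centralize both G/M and Z(G) is isomorphic to Hom(G/Z(G), M). -/

import Mathlib

open scoped IsMulCommutative

section Aux
variable {G : Type*} [Group G] [Finite G] {M : Subgroup G}

private theorem aux_comm (hM : M ≤ Subgroup.center G) (m : M) (g : G) : g * (m : G) = (m : G) * g :=
  Subgroup.mem_center_iff.mp (hM m.2) g

private def phiHom (hM : M ≤ Subgroup.center G) (f : (G ⧸ Subgroup.center G) →* ↥M) : G →* G where
  toFun x := x * f (QuotientGroup.mk x)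
  map_one' := by simp
  map_mul' x y := by
    simp only [QuotientGroup.mk_mul, map_mul, Subgroup.coe_mul]
    calc x * y * ((f (QuotientGroup.mk x) : G) * (f (QuotientGroup.mk y) : G))
        = x * (y * (f (QuotientGroup.mk x) : G)) * (f (QuotientGroup.mk y) : G) := by
          simp [mul_assoc]
      _ = x * ((f (QuotientGroup.mk x) : G) * y) * (f (QuotientGroup.mk y) : G) := by
          rw [aux_comm hM (f (QuotientGroup.mk x)) y]
      _ = x * (f (QuotientGroup.mk x) : G) * (y * (f (QuotientGroup.mk y) : G)) := by
          simp [mul_assoc]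

private theorem phiHom_inj (hM : M ≤ Subgroup.center G) (f : (G ⧸ Subgroup.center G) →* ↥M) :
    Function.Injective (phiHom hM f) := by
  rw [injective_iff_map_eq_one]
  intro x hx
  have hx1 : x * (f (QuotientGroup.mk x) : G) = 1 := hx
  have hx' : x = ((f (QuotientGroup.mk x) : G))⁻¹ := eq_inv_of_mul_eq_one_left hx1
  have hxM : x ∈ M := hx' ▸ M.inv_mem (f (QuotientGroup.mk x)).2
  have hmk : (QuotientGroup.mk x : G ⧸ Subgroup.center G) = 1 :=
    (QuotientGroup.eq_one_iff x).mpr (hM hxM)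
  rw [hx', hmk]; simp

private noncomputable def phiAut (hM : M ≤ Subgroup.center G) (f : (G ⧸ Subgroup.center G) →* ↥M) : MulAut G :=
  MulEquiv.ofBijective (phiHom hM f) (Finite.injective_iff_bijective.mp (phiHom_inj hM f))

private theorem phiAut_apply (hM : M ≤ Subgroup.center G) (f : (G ⧸ Subgroup.center G) →* ↥M) (x : G) :
    phiAut hM f x = x * f (QuotientGroup.mk x) := rfl

private def psiHom (hM : M ≤ Subgroup.center G) (α : MulAut G) (hα : ∀ x : G, x⁻¹ * α x ∈ M) : G →* ↥M where
  toFun x := ⟨x⁻¹ * α x, hα x⟩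
  map_one' := by ext; simp
  map_mul' x y := by
    ext
    simp only [map_mul, Subgroup.coe_mul]
    calc (x * y)⁻¹ * (α x * α y) = y⁻¹ * (x⁻¹ * α x) * α y := by group
      _ = (x⁻¹ * α x) * y⁻¹ * α y := by rw [aux_comm hM ⟨_, hα x⟩ y⁻¹]
      _ = x⁻¹ * α x * (y⁻¹ * α y) := by group

end Aux


/-- If M is a central subgroup of a finite group G contained in the kernel of every
homomorphism G → M, then Aut^M_{Z(G)}(G) is isomorphic to Hom(G/Z(G), M): there is a
bijection, multiplicative in both directions, given by α ↦ f_α. -/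
theorem stmt3 {G : Type*} [Group G] [Finite G] (M : Subgroup G) [IsMulCommutative M]
    (hM : M ≤ Subgroup.center G)
    (hker : ∀ f : G →* ↥M, ∀ m ∈ M, f m = 1) :
    ∃ e : ((G ⧸ Subgroup.center G) →* ↥M) ≃
        {α : MulAut G // (∀ x : G, x⁻¹ * α x ∈ M) ∧ ∀ z ∈ Subgroup.center G, α z = z},
      (∀ f g : (G ⧸ Subgroup.center G) →* ↥M,
        ((e (f * g) : MulAut G)) = (e f : MulAut G) * (e g : MulAut G)) ∧
      (∀ (f : (G ⧸ Subgroup.center G) →* ↥M) (x : G),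
        (e f : MulAut G) x = x * (f (QuotientGroup.mk x) : G)) := by
  have hmkM : ∀ (m : G), m ∈ M → (QuotientGroup.mk m : G ⧸ Subgroup.center G) = 1 :=
    fun m hm => (QuotientGroup.eq_one_iff m).mpr (hM hm)
  refine ⟨⟨fun f => ⟨phiAut hM f, fun x => by
        rw [phiAut_apply]
        simpa using (f (QuotientGroup.mk x)).2,
      fun z hz => by
        rw [phiAut_apply, (QuotientGroup.eq_one_iff z).mpr hz]
        simp⟩,
    fun α => QuotientGroup.lift (Subgroup.center G) (psiHom hM α.1 α.2.1)
      (fun z hz => by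
        ext
        simp [psiHom, α.2.2 z hz]),
    fun f => by
      ext x
      simp [psiHom, phiAut_apply],
    fun α => by
      refine Subtype.ext (MulEquiv.ext fun x => ?_)
      show phiAut hM _ x = α.1 x
      rw [phiAut_apply]
      show x * (psiHom hM α.1 α.2.1 x : G) = α.1 x
      simp [psiHom]⟩, ?_, ?_⟩
  · intro f g
    refine MulEquiv.ext fun x => ?_
    show phiAut hM (f * g) x = phiAut hM f (phiAut hM g x)
    rw [phiAut_apply, phiAut_apply, phiAut_apply, QuotientGroup.mk_mul,
      hmkM _ (g (QuotientGroup.mk x)).2, mul_one]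
    simp only [MonoidHom.mul_apply, Subgroup.coe_mul]
    have h : ((f (QuotientGroup.mk x) : G)) * g (QuotientGroup.mk x) =
        ((g (QuotientGroup.mk x) : G)) * f (QuotientGroup.mk x) := by
      exact_mod_cast mul_comm (f (QuotientGroup.mk x)) (g (QuotientGroup.mk x))
    rw [h, mul_assoc]
  · intro f x
    exact phiAut_apply hM f x
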